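/- Let F be an algebraically closed field, n > 1 an integer, and γ₁ ≠ γ₂ in F. For x in the split octonion algebra O over F, the equation x^n = γ₁·e₁ + γ₂·e₂ holds if and only if there exist ξ₁, ξ₂ ∈ F with ξ₁^n = γ₁, ξ₂^n = γ₂, and x = ξ₁·e₁ + ξ₂·e₂. -/
import Mathlib


noncomputable section

/-- The split octonion algebra over `F`, given by Zorn vector matrices
`(x1, u; v, x2)` with `x1, x2 ∈ F` and `u, v ∈ F³`. -/
@[ext]
structure SplitOctonion (F : Type*) where
  x1 : F
  u : Fin 3 → F
  v : Fin 3 → F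
  x2 : F

namespace SplitOctonion

variable {F : Type*} [Field F]

/-- Dot product on `F³`. -/
def dot (x y : Fin 3 → F) : F := x 0 * y 0 + x 1 * y 1 + x 2 * y 2

/-- Cross product on `F³`. -/
def cross (x y : Fin 3 → F) : Fin 3 → F :=
  ![x 1 * y 2 - x 2 * y 1, x 2 * y 0 - x 0 * y 2, x 0 * y 1 - x 1 * y 0]

instance : Zero (SplitOctonion F) := ⟨⟨0, 0, 0, 0⟩⟩
instance : One (SplitOctonion F) := ⟨⟨1, 0, 0, 1⟩⟩
instance : Add (SplitOctonion F) :=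
  ⟨fun x y => ⟨x.x1 + y.x1, x.u + y.u, x.v + y.v, x.x2 + y.x2⟩⟩
instance : Neg (SplitOctonion F) := ⟨fun x => ⟨-x.x1, -x.u, -x.v, -x.x2⟩⟩
instance : SMul F (SplitOctonion F) :=
  ⟨fun c x => ⟨c * x.x1, c • x.u, c • x.v, c * x.x2⟩⟩

/-- Zorn vector matrix multiplication. -/
instance : Mul (SplitOctonion F) :=
  ⟨fun x y => ⟨x.x1 * y.x1 + dot x.u y.v,
    x.x1 • y.u + y.x2 • x.u - cross x.v y.v,
    y.x1 • x.v + x.x2 • y.v + cross x.u y.u,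
    x.x2 * y.x2 + dot x.v y.u⟩⟩

@[simp] lemma zero_x1 : (0 : SplitOctonion F).x1 = 0 := rfl
@[simp] lemma zero_u : (0 : SplitOctonion F).u = 0 := rfl
@[simp] lemma zero_v : (0 : SplitOctonion F).v = 0 := rfl
@[simp] lemma zero_x2 : (0 : SplitOctonion F).x2 = 0 := rfl
@[simp] lemma add_x1 (x y : SplitOctonion F) : (x + y).x1 = x.x1 + y.x1 := rfl
@[simp] lemma add_u (x y : SplitOctonion F) : (x + y).u = x.u + y.u := rfl
@[simp] lemma add_v (x y : SplitOctonion F) : (x + y).v = x.v + y.v := rfl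
@[simp] lemma add_x2 (x y : SplitOctonion F) : (x + y).x2 = x.x2 + y.x2 := rfl
@[simp] lemma neg_x1 (x : SplitOctonion F) : (-x).x1 = -x.x1 := rfl
@[simp] lemma neg_u (x : SplitOctonion F) : (-x).u = -x.u := rfl
@[simp] lemma neg_v (x : SplitOctonion F) : (-x).v = -x.v := rfl
@[simp] lemma neg_x2 (x : SplitOctonion F) : (-x).x2 = -x.x2 := rfl
@[simp] lemma smul_x1 (c : F) (x : SplitOctonion F) : (c • x).x1 = c * x.x1 := rfl
@[simp] lemma smul_u (c : F) (x : SplitOctonion F) : (c • x).u = c • x.u := rfl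
@[simp] lemma smul_v (c : F) (x : SplitOctonion F) : (c • x).v = c • x.v := rfl
@[simp] lemma smul_x2 (c : F) (x : SplitOctonion F) : (c • x).x2 = c * x.x2 := rfl

instance : AddCommGroup (SplitOctonion F) where
  add_assoc x y z := by ext <;> simp [add_assoc]
  zero_add x := by ext <;> simp
  add_zero x := by ext <;> simp
  add_comm x y := by ext <;> simp [add_comm]
  neg_add_cancel x := by ext <;> simp
  nsmul := nsmulRec
  zsmul := zsmulRec

instance : Module F (SplitOctonion F) where
  one_smul x := by ext <;> simp
  mul_smul c d x := by ext <;> simp [mul_assoc, mul_smul]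
  smul_zero c := by ext <;> simp
  smul_add c x y := by ext <;> simp [mul_add, smul_add]
  add_smul c d x := by ext <;> simp [add_mul, add_smul]
  zero_smul x := by ext <;> simp

/-- Powers of a single octonion (well defined by power-associativity). -/
def npow (x : SplitOctonion F) : ℕ → SplitOctonion F
  | 0 => 1
  | n + 1 => npow x n * x

instance : Pow (SplitOctonion F) ℕ := ⟨npow⟩

/-- Substitution of an octonion into a polynomial over `F`:
`f(x) = αₙ xⁿ + ⋯ + α₁ x + α₀ • 1`. -/
def peval (f : Polynomial F) (x : SplitOctonion F) : SplitOctonion F :=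
  f.sum fun i c => c • x ^ i

/-- The octonion `e₁`. -/
def e1 : SplitOctonion F := ⟨1, 0, 0, 0⟩
/-- The octonion `e₂`. -/
def e2 : SplitOctonion F := ⟨0, 0, 0, 1⟩
/-- The octonion `u₁`. -/
def u1 : SplitOctonion F := ⟨0, ![1, 0, 0], 0, 0⟩

/-- Conjugation on `O`. -/
def conj (x : SplitOctonion F) : SplitOctonion F := ⟨x.x2, -x.u, -x.v, x.x1⟩

/-- The norm of an octonion. -/
def normO (x : SplitOctonion F) : F := x.x1 * x.x2 - dot x.u x.v

/-- The trace of an octonion. -/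
def trO (x : SplitOctonion F) : F := x.x1 + x.x2

/-- `g` is an `F`-algebra automorphism of `O`: a linear bijection preserving
multiplication (and the unit). -/
def IsAlgAut (g : SplitOctonion F ≃ₗ[F] SplitOctonion F) : Prop :=
  g 1 = 1 ∧ ∀ x y, g (x * y) = g x * g y

@[simp] lemma mul_x1' (x y : SplitOctonion F) :
    (x * y).x1 = x.x1 * y.x1 + dot x.u y.v := rfl
@[simp] lemma mul_u' (x y : SplitOctonion F) :
    (x * y).u = x.x1 • y.u + y.x2 • x.u - cross x.v y.v := rfl
@[simp] lemma mul_v' (x y : SplitOctonion F) :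
    (x * y).v = y.x1 • x.v + x.x2 • y.v + cross x.u y.u := rfl
@[simp] lemma mul_x2' (x y : SplitOctonion F) :
    (x * y).x2 = x.x2 * y.x2 + dot x.v y.u := rfl
@[simp] lemma one_x1' : (1 : SplitOctonion F).x1 = 1 := rfl
@[simp] lemma one_u' : (1 : SplitOctonion F).u = 0 := rfl
@[simp] lemma one_v' : (1 : SplitOctonion F).v = 0 := rfl
@[simp] lemma one_x2' : (1 : SplitOctonion F).x2 = 1 := rfl

lemma pow_succ' (x : SplitOctonion F) (n : ℕ) : x ^ (n + 1) = x ^ n * x := rfl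
lemma pow_zero' (x : SplitOctonion F) : x ^ 0 = 1 := rfl

lemma diag_pow (a b : F) (n : ℕ) :
    (⟨a, 0, 0, b⟩ : SplitOctonion F) ^ n = ⟨a ^ n, 0, 0, b ^ n⟩ := by
  induction n with
  | zero =>
    rw [pow_zero']
    refine SplitOctonion.ext (by simp) rfl rfl (by simp)
  | succ n ih =>
    rw [pow_succ', ih]
    refine SplitOctonion.ext ?_ ?_ ?_ ?_
    · simp [dot, pow_succ]
    · funext i; fin_cases i <;> simp [cross]
    · funext i; fin_cases i <;> simp [cross]
    · simp [dot, pow_succ]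

lemma pow_span (x : SplitOctonion F) (n : ℕ) : ∃ p q : F,
    x ^ (n + 1) =
      (⟨p + q * x.x1, q • x.u, q • x.v, p + q * x.x2⟩ : SplitOctonion F) := by
  induction n with
  | zero =>
    refine ⟨0, 1, ?_⟩
    rw [pow_succ', pow_zero']
    refine SplitOctonion.ext ?_ ?_ ?_ ?_
    · simp [dot]
    · funext i; fin_cases i <;> simp [cross]
    · funext i; fin_cases i <;> simp [cross]
    · simp [dot]
  | succ n ih =>
    obtain ⟨p, q, h⟩ := ih
    refine ⟨-(q * (x.x1 * x.x2 - dot x.u x.v)), p + q * (x.x1 + x.x2), ?_⟩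
    rw [pow_succ', h]
    refine SplitOctonion.ext ?_ ?_ ?_ ?_
    · simp only [mul_x1']
      simp [dot]; ring
    · funext i; fin_cases i <;>
        (simp [cross, dot]; ring)
    · funext i; fin_cases i <;>
        (simp [cross, dot]; ring)
    · simp only [mul_x2']
      simp [dot]; ring

lemma diag_form (a b : F) :
    a • (e1 : SplitOctonion F) + b • e2 = ⟨a, 0, 0, b⟩ := by
  refine SplitOctonion.ext ?_ ?_ ?_ ?_ <;>
    simp [e1, e2]

end SplitOctonion

open SplitOctonion in
/-- the `n`-th roots of `γ₁·e₁ + γ₂·e₂` with `γ₁ ≠ γ₂`. -/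
theorem pow_eq_diag_iff {F : Type*} [Field F] [IsAlgClosed F]
    (n : ℕ) (hn : 1 < n) (γ₁ γ₂ : F) (hγ : γ₁ ≠ γ₂) (x : SplitOctonion F) :
    x ^ n = γ₁ • (e1 : SplitOctonion F) + γ₂ • e2 ↔
      ∃ ξ₁ ξ₂ : F, ξ₁ ^ n = γ₁ ∧ ξ₂ ^ n = γ₂ ∧
        x = ξ₁ • (e1 : SplitOctonion F) + ξ₂ • e2 := by
  rw [diag_form]
  constructor
  · intro h
    obtain ⟨m, rfl⟩ : ∃ m, n = m + 1 := ⟨n - 1, by omega⟩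
    obtain ⟨p, q, hx⟩ := pow_span x m
    have h1 : p + q * x.x1 = γ₁ := congrArg SplitOctonion.x1 (hx ▸ h)
    have h2 : p + q * x.x2 = γ₂ := congrArg SplitOctonion.x2 (hx ▸ h)
    have hu : q • x.u = 0 := congrArg SplitOctonion.u (hx ▸ h)
    have hv : q • x.v = 0 := congrArg SplitOctonion.v (hx ▸ h)
    have hq : q ≠ 0 := by
      rintro rfl
      simp only [zero_mul, add_zero] at h1 h2
      exact hγ (h1.symm.trans h2)
    have hu0 : x.u = 0 := (smul_eq_zero.mp hu).resolve_left hq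
    have hv0 : x.v = 0 := (smul_eq_zero.mp hv).resolve_left hq
    have hxd : x = ⟨x.x1, 0, 0, x.x2⟩ := by
      refine SplitOctonion.ext rfl hu0 hv0 rfl
    rw [hxd, diag_pow] at h
    exact ⟨x.x1, x.x2, congrArg SplitOctonion.x1 h,
      congrArg SplitOctonion.x2 h, by rw [diag_form, hxd]⟩
  · rintro ⟨ξ₁, ξ₂, h1, h2, rfl⟩
    rw [diag_form, diag_pow, h1, h2]
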